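/- Under the abstract variational framework, let γ₁, γ₂ : X → ℝ be bounded measurable functions, let ℓ_g, ℓ_h : V → ℝ be linear functionals, let u₁ ∈ V be a weak solution for (γ₁, ℓ_h) and u₂ ∈ V a weak solution for (γ₂, ℓ_g). Then the Alessandrini-type identity holds: ℓ_h(u₂) − ℓ_g(u₁) = ∫_X (γ₁ − γ₂)·(Tu₁)·(Tu₂) dμ. (This is the identity ∫_{∂Ω} h (Λ(γ₂) − Λ(γ₁)) g ds = ∫_Γ (γ₁ − γ₂) u₁ʰ u₂ᵍ ds from the proof of the uniqueness theorem.) -/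

import Mathlib

open MeasureTheory

/-- Alessandrini-type identity (proof of Theorem 2.1):
`ℓ_h(u₂) − ℓ_g(u₁) = ∫_X (γ₁ − γ₂)·(Tu₁)·(Tu₂) dμ`. -/
theorem alessandrini_identity
    {V : Type*} [AddCommGroup V] [Module ℝ V]
    {X : Type*} [MeasurableSpace X] {μ : Measure X}
    (a : V → V → ℝ)
    (ha_symm : ∀ v w, a v w = a w v)
    (ha_add : ∀ u v w, a (u + v) w = a u w + a v w)
    (ha_smul : ∀ (c : ℝ) (v w : V), a (c • v) w = c * a v w)
    (ha_nonneg : ∀ v, 0 ≤ a v v)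
    (T : V →ₗ[ℝ] (X → ℝ))
    (hT : ∀ v, MemLp (T v) 2 μ)
    (γ₁ γ₂ : X → ℝ)
    (hγ₁m : Measurable γ₁) (hγ₂m : Measurable γ₂)
    (hγ₁b : ∃ C, ∀ x, |γ₁ x| ≤ C) (hγ₂b : ∃ C, ∀ x, |γ₂ x| ≤ C)
    (ℓg ℓh : V →ₗ[ℝ] ℝ)
    (u₁ u₂ : V)
    (hu₁ : ∀ w, a u₁ w + ∫ x, γ₁ x * T u₁ x * T w x ∂μ = ℓh w)
    (hu₂ : ∀ w, a u₂ w + ∫ x, γ₂ x * T u₂ x * T w x ∂μ = ℓg w) :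
    ℓh u₂ - ℓg u₁ = ∫ x, (γ₁ x - γ₂ x) * T u₁ x * T u₂ x ∂μ := by
  have hmul : Integrable (fun x => T u₁ x * T u₂ x) μ := by
    have := (hT u₂).smul (hT u₁) (p := 2) (q := 2) (r := 1)
    simpa [smul_eq_mul, memLp_one_iff_integrable, Pi.smul_apply', Pi.mul_def] using this
  obtain ⟨C₁, hC₁⟩ := hγ₁b
  obtain ⟨C₂, hC₂⟩ := hγ₂b
  have hI1 : Integrable (fun x => γ₁ x * (T u₁ x * T u₂ x)) μ :=
    hmul.bdd_mul (c := C₁) hγ₁m.aestronglyMeasurable (Filter.Eventually.of_forall fun x => by simpa using hC₁ x)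
  have hI2 : Integrable (fun x => γ₂ x * (T u₁ x * T u₂ x)) μ :=
    hmul.bdd_mul (c := C₂) hγ₂m.aestronglyMeasurable (Filter.Eventually.of_forall fun x => by simpa using hC₂ x)
  have e1 := hu₁ u₂
  have e2 := hu₂ u₁
  have : ℓh u₂ - ℓg u₁ =
      (∫ x, γ₁ x * (T u₁ x * T u₂ x) ∂μ) - ∫ x, γ₂ x * (T u₁ x * T u₂ x) ∂μ := by
    rw [← e1, ← e2, ha_symm u₂ u₁]
    have h1 : (∫ x, γ₁ x * T u₁ x * T u₂ x ∂μ) = ∫ x, γ₁ x * (T u₁ x * T u₂ x) ∂μ := by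
      congr 1; ext x; ring
    have h2 : (∫ x, γ₂ x * T u₂ x * T u₁ x ∂μ) = ∫ x, γ₂ x * (T u₁ x * T u₂ x) ∂μ := by
      congr 1; ext x; ring
    rw [h1, h2]; ring
  rw [this, ← integral_sub hI1 hI2]
  congr 1; ext x; ring
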